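/- If β_1 = β_0 + c − 1 and β_i = binom(β_0 + i − 3, i − 2)·binom(β_1, β_0 + i − 1) for i ≥ 2 (the Buchsbaum–Rim Betti numbers), then β_i ≥ binom(c, i) for all 0 ≤ i ≤ c, assuming β_0 ≥ 1 and c ≥ 1. -/
import Mathlib


/-- If `β_1 = β_0 + c - 1` and `β_i = binom(β_0+i-3, i-2) * binom(β_1, β_0+i-1)` for `i ≥ 2`
(the Buchsbaum–Rim Betti numbers), then `β_i ≥ binom(c,i)` for all `0 ≤ i ≤ c`,
assuming `β_0 ≥ 1` and `c ≥ 1`. -/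
theorem buchsbaumRim_ge_BEH (c : ℕ) (hc : 1 ≤ c) (β : ℕ → ℕ) (hβ0 : 1 ≤ β 0)
    (hβ1 : β 1 = β 0 + c - 1)
    (hβ : ∀ i, 2 ≤ i → β i = (β 0 + i - 3).choose (i - 2) * (β 1).choose (β 0 + i - 1)) :
    ∀ i, i ≤ c → c.choose i ≤ β i := by
  intro i hi
  match i, hi with
  | 0, _ => simpa using hβ0
  | 1, _ => rw [Nat.choose_one_right]; omega
  | (i+2), hi =>
    rw [hβ (i+2) (by omega)]
    have h2 : 1 ≤ (β 0 + (i+2) - 3).choose ((i+2) - 2) :=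
      Nat.choose_pos (by omega)
    have h3 : β 0 + (i+2) - 1 = β 0 + i + 1 := by omega
    have hsymm : (β 1).choose (β 0 + (i+2) - 1) = (β 1).choose (c - (i+2)) := by
      rw [h3, hβ1]
      have := Nat.choose_symm (n := β 0 + c - 1) (k := β 0 + i + 1) (by omega)
      rw [← this]
      congr 1
      omega
    have h4 : c.choose (i+2) = c.choose (c - (i+2)) := (Nat.choose_symm hi).symm
    calc c.choose (i+2) = c.choose (c - (i+2)) := h4
      _ ≤ (β 1).choose (c - (i+2)) := Nat.choose_le_choose _ (by omega)
      _ = (β 1).choose (β 0 + (i+2) - 1) := hsymm.symm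
      _ ≤ (β 0 + (i+2) - 3).choose ((i+2) - 2) * (β 1).choose (β 0 + (i+2) - 1) :=
        Nat.le_mul_of_pos_left _ h2
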